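/- Let E be a number field, S a set of places of E, u ∈ S a place, E_S a maximal algebraic extension of E unramified outside S, and φ : E_S → \bar{E_u} an E-embedding. Then φ(E_S) is dense in \bar{E_u} if and only if the induced map Gal(\bar{E_u}/E_u) → Gal(E_S/E) is injective. -/

import Mathlib

open NumberField

/-- A (finite) extension `L` of a number field `E` is unramified outside a set
`S = Sf ∪ Sinf` of places of `E` (`Sf` finite places, given by maximal ideals of `𝓞 E`,
and `Sinf` infinite places): every maximal ideal of `𝓞 L` lying over a maximal ideal
`𝔭 ∉ Sf` has ramification index `1`, and every infinite place of `L` lying over an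
infinite place not in `Sinf` is unramified. -/
def UnramifiedOutside (E : Type) [Field E] [NumberField E]
    (Sf : Set (Ideal (𝓞 E))) (Sinf : Set (InfinitePlace E))
    (L : Type) [Field L] [Algebra E L] : Prop :=
  (∀ 𝔭 : Ideal (𝓞 E), 𝔭.IsMaximal → 𝔭 ∉ Sf → ∀ 𝔓 : Ideal (𝓞 L), 𝔓.IsMaximal →
      Ideal.comap (algebraMap (𝓞 E) (𝓞 L)) 𝔓 = 𝔭 →
      Ideal.ramificationIdx' 𝔭 𝔓 = 1) ∧
  (∀ w : InfinitePlace L, w.comap (algebraMap E L) ∉ Sinf → w.IsUnramified E)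

/-- `E_S`: the maximal algebraic extension of `E` unramified outside `S`, realized inside a
fixed algebraic closure of `E` as the compositum of all finite subextensions unramified
outside `S`. -/
noncomputable def maxUnramifiedOutside (E : Type) [Field E] [NumberField E]
    (Sf : Set (Ideal (𝓞 E))) (Sinf : Set (InfinitePlace E)) :
    IntermediateField E (AlgebraicClosure E) :=
  ⨆ L : {L : IntermediateField E (AlgebraicClosure E) //
      FiniteDimensional E L ∧ UnramifiedOutside E Sf Sinf L},
    (L : IntermediateField E (AlgebraicClosure E))

/-- Let `E` be a number field, `S` a set of places of `E`, `u ∈ S` a place, `E_S` a maximal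
algebraic extension of `E` unramified outside `S`, and `φ : E_S → \bar{E_u}` an
`E`-embedding, where `E_u` is the completion of `E` at `u` (a field `Eu` with an absolute
value `w` extending the place `u`, in which `E` is dense and which is complete) and
`\bar{E_u} = Ω` is an algebraic closure of `E_u`, equipped with the absolute value `W`
extending `w`.  Then `φ(E_S)` is dense in `\bar{E_u}` if and only if the induced map
`Gal(\bar{E_u}/E_u) → Gal(E_S/E)`, `σ ↦ σ ∘ φ`, is injective (equivalently, has trivial
kernel: any `σ` fixing `φ(E_S)` pointwise is the identity). -/


lemma pow_le_aux {a b C : ℝ} (hb : 0 < b)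
    (h : ∀ n : ℕ, 1 ≤ n → a ^ n ≤ C * b ^ n) : a ≤ b := by
  by_contra hab
  push_neg at hab
  have ht : 1 < a / b := (one_lt_div hb).2 hab
  obtain ⟨n, hn⟩ := pow_unbounded_of_one_lt C ht
  have hn1 : a ^ (n+1) ≤ C * b ^ (n+1) := h (n+1) (Nat.le_add_left 1 n)
  have h2 : (a / b) ^ (n+1) ≤ C := by
    rw [div_pow, div_le_iff₀ (by positivity)]
    exact hn1
  have h3 : (a / b) ^ n ≤ (a / b) ^ (n+1) :=
    pow_le_pow_right₀ (le_of_lt ht) (Nat.le_succ n)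
  linarith

lemma algEquiv_norm_le {Eu Ω : Type} [NontriviallyNormedField Eu] [CompleteSpace Eu]
    [NormedField Ω] [Algebra Eu Ω] [Algebra.IsAlgebraic Eu Ω]
    (hiso : ∀ c : Eu, ‖algebraMap Eu Ω c‖ = ‖c‖)
    (σ : Ω ≃ₐ[Eu] Ω) (z : Ω) : ‖σ z‖ ≤ ‖z‖ := by
  letI : NormedSpace Eu Ω := ⟨fun c x => by
    rw [Algebra.smul_def, norm_mul, hiso]⟩
  rcases eq_or_ne z 0 with rfl | hz
  · simp
  have hzi : IsIntegral Eu z := (Algebra.IsAlgebraic.isAlgebraic z).isIntegral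
  set p := minpoly Eu z with hp
  set L : IntermediateField Eu Ω := IntermediateField.adjoin Eu (p.rootSet Ω) with hL
  haveI : FiniteDimensional Eu L :=
    IntermediateField.finiteDimensional_adjoin (fun x _ =>
      ((Algebra.IsAlgebraic.isAlgebraic x).isIntegral))
  have hzL : z ∈ L := IntermediateField.subset_adjoin _ _
    (Polynomial.mem_rootSet.2 ⟨minpoly.ne_zero hzi, minpoly.aeval _ _⟩)
  letI : NormedSpace Eu L := ⟨fun c x => by
    have : ‖c • x‖ = ‖(c • (x:Ω) : Ω)‖ := rfl
    rw [this, Algebra.smul_def, norm_mul, hiso]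
    exact le_of_eq rfl⟩
  let f : L →ₗ[Eu] Ω := σ.toLinearMap.comp L.val.toLinearMap
  have hfc : Continuous f := f.continuous_of_finiteDimensional
  let g : L →L[Eu] Ω := ⟨f, hfc⟩
  have hbound : ∀ v : L, ‖f v‖ ≤ ‖g‖ * ‖v‖ := fun v => g.le_opNorm v
  have key : ∀ n : ℕ, 1 ≤ n → ‖σ z‖ ^ n ≤ (max ‖g‖ 1) * ‖z‖ ^ n := by
    intro n _
    have hmem : z ^ n ∈ L := pow_mem hzL n
    set v : L := ⟨z ^ n, hmem⟩ with hv
    have h1 : ‖σ z‖ ^ n = ‖f v‖ := by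
      simp only [f, LinearMap.comp_apply, AlgEquiv.toLinearMap_apply]
      rw [← norm_pow, ← map_pow]
      rfl
    have h2 : ‖v‖ = ‖z‖ ^ n := by rw [← norm_pow]; rfl
    have h3 := hbound v
    rw [h2] at h3
    rw [h1]
    refine h3.trans ?_
    gcongr
    exact le_max_left _ _
  exact pow_le_aux (norm_pos_iff.2 hz) key

theorem stmt9
    (E : Type) [Field E] [NumberField E]
    (Sf : Set (Ideal (𝓞 E))) (Sinf : Set (InfinitePlace E))
    (Eu : Type) [Field Eu] [Algebra E Eu]
    (w : AbsoluteValue Eu ℝ)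
    -- the place of `E` induced by `w` is a member `u` of `S`
    (hu : (∃ 𝔭 ∈ Sf, 𝔭.IsMaximal ∧ ∀ x : 𝓞 E,
            w (algebraMap E Eu (x : E)) ≤ 1 ∧ (w (algebraMap E Eu (x : E)) < 1 ↔ x ∈ 𝔭))
        ∨ (∃ v ∈ Sinf, ∀ x : E, w (algebraMap E Eu x) = v x))
    -- `Eu` is the completion: `E` is dense and `Eu` is complete with respect to `w`
    (hdense : ∀ x : Eu, ∀ ε : ℝ, 0 < ε → ∃ y : E, w (x - algebraMap E Eu y) < ε)
    (hcomplete : ∀ f : ℕ → Eu,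
      (∀ ε : ℝ, 0 < ε → ∃ N, ∀ m n : ℕ, N ≤ m → N ≤ n → w (f m - f n) < ε) →
      ∃ x : Eu, ∀ ε : ℝ, 0 < ε → ∃ N, ∀ n : ℕ, N ≤ n → w (f n - x) < ε)
    (Ω : Type) [Field Ω] [Algebra Eu Ω] [IsAlgClosure Eu Ω]
    [Algebra E Ω] [IsScalarTower E Eu Ω]
    (W : AbsoluteValue Ω ℝ) (hW : ∀ x : Eu, W (algebraMap Eu Ω x) = w x)
    (φ : ↥(maxUnramifiedOutside E Sf Sinf) →ₐ[E] Ω) :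
    (∀ x : Ω, ∀ ε : ℝ, 0 < ε → ∃ y, W (x - φ y) < ε) ↔
      (∀ σ : Ω ≃ₐ[Eu] Ω, (∀ y, σ (φ y) = φ y) → ∀ x, σ x = x) := by
  classical
  -- nontriviality of w
  have hnontriv : ∃ a : Eu, 1 < w a := by
    rcases hu with ⟨𝔭, _, hmax, hval⟩ | ⟨v, _, hv⟩
    · have hne : 𝔭 ≠ ⊥ := Ring.ne_bot_of_isMaximal_of_not_isField hmax
        (NumberField.RingOfIntegers.not_isField E)
      obtain ⟨ξ, hξ𝔭, hξ0⟩ := Submodule.exists_mem_ne_zero_of_ne_bot hne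
      have h1 : w (algebraMap E Eu (ξ : E)) < 1 := (hval ξ).2.2 hξ𝔭
      have h0 : 0 < w (algebraMap E Eu (ξ : E)) := by
        refine w.pos ?_
        simp only [ne_eq, map_eq_zero]
        exact_mod_cast hξ0
      refine ⟨(algebraMap E Eu (ξ : E))⁻¹, ?_⟩
      rw [map_inv₀]
      exact (one_lt_inv₀ h0).2 h1
    · refine ⟨algebraMap E Eu 2, ?_⟩
      rw [hv 2]
      have : v 2 = ‖((NumberField.InfinitePlace.embedding v) 2)‖ := by
        rw [← NumberField.InfinitePlace.apply, NumberField.InfinitePlace.mk_embedding]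
      rw [this, map_ofNat]
      norm_num
  letI nEu : NontriviallyNormedField Eu :=
    { w.toNormedField with non_trivial := hnontriv }
  letI nOm : NormedField Ω := W.toNormedField
  haveI hcompl : CompleteSpace Eu := by
    apply Metric.complete_of_cauchySeq_tendsto
    intro u hu'
    rw [Metric.cauchySeq_iff] at hu'
    obtain ⟨x, hx⟩ := hcomplete u (fun ε hε => by
      obtain ⟨N, hN⟩ := hu' ε hε
      exact ⟨N, fun m n hm hn => by have := hN m hm n hn; rwa [dist_eq_norm] at this⟩)
    refine ⟨x, Metric.tendsto_atTop.2 (fun ε hε => ?_)⟩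
    obtain ⟨N, hN⟩ := hx ε hε
    exact ⟨N, fun n hn => by rw [dist_eq_norm]; exact hN n hn⟩
  have hiso : ∀ c : Eu, ‖algebraMap Eu Ω c‖ = ‖c‖ := hW
  constructor
  · -- dense → injective
    intro hd σ hσ x
    have hle : ∀ z : Ω, W (σ z) ≤ W z := fun z => algEquiv_norm_le hiso σ z
    have hzero : σ x - x = 0 := by
      by_contra h0
      have hpos : 0 < W (σ x - x) := W.pos h0
      obtain ⟨y, hy⟩ := hd x (W (σ x - x) / 2) (by linarith)
      have heq : σ x - x = σ (x - φ y) - (x - φ y) := by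
        rw [map_sub, hσ y]; ring
      have h1 : W (σ x - x) ≤ W (σ (x - φ y)) + W (x - φ y) := by
        rw [heq]; exact norm_sub_le (σ (x - φ y)) (x - φ y)
      have h2 := hle (x - φ y)
      linarith
    exact sub_eq_zero.1 hzero
  · -- injective → dense
    intro hinj x ε hε
    set F₀ : Subfield Ω := (φ : ↥(maxUnramifiedOutside E Sf Sinf) →+* Ω).fieldRange with hF₀
    set K₀ : Subfield Ω := F₀.topologicalClosure with hK₀
    have hEuK : ∀ e : Eu, algebraMap Eu Ω e ∈ K₀ := by
      intro e
      show algebraMap Eu Ω e ∈ _root_.closure (F₀ : Set Ω)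
      rw [Metric.mem_closure_iff]
      intro δ hδ
      obtain ⟨y, hy⟩ := hdense e δ hδ
      refine ⟨φ (algebraMap E _ y), ⟨algebraMap E _ y, rfl⟩, ?_⟩
      have : φ (algebraMap E (maxUnramifiedOutside E Sf Sinf) y) = algebraMap Eu Ω (algebraMap E Eu y) := by
        rw [AlgHom.commutes, IsScalarTower.algebraMap_apply E Eu Ω]
      rw [this]
      rw [dist_eq_norm]
      show W (algebraMap Eu Ω e - algebraMap Eu Ω (algebraMap E Eu y)) < δ
      rw [← map_sub, hW]
      exact hy
    set K : IntermediateField Eu Ω := K₀.toIntermediateField hEuK with hK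
    have htop : ∀ z : Ω, z ∈ K₀ := by
      by_contra hcon
      push_neg at hcon
      obtain ⟨x₀, hx₀⟩ := hcon
      have hx₀K : x₀ ∉ K := hx₀
      haveI : IsAlgClosed Ω := IsAlgClosure.isAlgClosed Eu
      haveI hnz : NoZeroSMulDivisors (↥K) Ω :=
        inferInstance
      haveI : IsAlgClosure (↥K) Ω := ⟨inferInstance, inferInstance⟩
      haveI : Normal (↥K) Ω := IsAlgClosure.normal (↥K) Ω
      haveI : CharZero Ω := charZero_of_injective_algebraMap (algebraMap E Ω).injective
      haveI : CharZero (↥K) := inferInstance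
      have hint : IsIntegral (↥K) x₀ := (Algebra.IsAlgebraic.isAlgebraic x₀).isIntegral
      have hsep : (minpoly (↥K) x₀).Separable := (minpoly.irreducible hint).separable
      have hnotr : x₀ ∉ (algebraMap (↥K) Ω).range := by
        rintro ⟨k, rfl⟩
        exact hx₀K k.2
      have hdeg : 2 ≤ (minpoly (↥K) x₀).natDegree :=
        (minpoly.two_le_natDegree_iff hint).2 hnotr
      have hx₀mem : x₀ ∈ (minpoly (↥K) x₀).rootSet Ω :=
        Polynomial.mem_rootSet.2 ⟨minpoly.ne_zero hint, minpoly.aeval _ _⟩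
      have hcard : Fintype.card ((minpoly (↥K) x₀).rootSet Ω) = (minpoly (↥K) x₀).natDegree :=
        Polynomial.card_rootSet_eq_natDegree hsep (IsAlgClosed.splits _)
      obtain ⟨⟨x', hx'⟩, hne⟩ := Fintype.exists_ne_of_one_lt_card
        (by rw [hcard]; omega) (⟨x₀, hx₀mem⟩ : ((minpoly (↥K) x₀).rootSet Ω))
      have hx'ne : x' ≠ x₀ := fun h => hne (Subtype.ext h)
      obtain ⟨σ', hσ'⟩ := minpoly.exists_algEquiv_of_root' (K := ↥K) (L := Ω)
        hint.isAlgebraic (Polynomial.mem_rootSet.1 hx').2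
      set σ : Ω ≃ₐ[Eu] Ω := AlgEquiv.restrictScalars Eu σ' with hσdef
      have hfix : ∀ y, σ (φ y) = φ y := by
        intro y
        have hyK : φ y ∈ K₀ := F₀.le_topologicalClosure ⟨y, rfl⟩
        show σ' (φ y) = φ y
        have h : φ y = algebraMap (↥K) Ω ⟨φ y, hyK⟩ := rfl
        rw [h, AlgEquiv.commutes]
      have := hinj σ hfix x₀
      rw [show σ x₀ = σ' x₀ from rfl, hσ'] at this
      exact hx'ne this
    have hx : x ∈ _root_.closure (F₀ : Set Ω) := htop x
    rw [Metric.mem_closure_iff] at hx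
    obtain ⟨b, hbF, hbd⟩ := hx ε hε
    obtain ⟨y, hy⟩ := hbF
    refine ⟨y, ?_⟩
    have hy' : φ y = b := hy
    rw [hy']
    rw [dist_eq_norm] at hbd
    exact hbd
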